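/- Let G be a finite connected vertex-transitive graph of order n, degree m ≥ 1, and diameter D ≥ 1. Then there exists a set 𝒫 of geodesic paths in G, each of length D (each being a shortest path between two vertices at distance D), such that every vertex of G either lies on, or is adjacent to a vertex of, some path in 𝒫, and |𝒫| ≤ (3n/(mD)) · (1 + log₂((D + 1)(m + 1))). -/

import Mathlib

open SimpleGraph Finset

section Aux

variable {V : Type*} (G : SimpleGraph V)

private lemma aux_iso_dist_le (φ : G ≃g G) (hconn : G.Connected) (a b : V) :
    G.dist (φ a) (φ b) ≤ G.dist a b := by
  obtain ⟨w, hw⟩ := hconn.exists_walk_length_eq_dist a b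
  calc G.dist (φ a) (φ b) ≤ (w.map φ.toHom).length := SimpleGraph.dist_le _
    _ = G.dist a b := by rw [SimpleGraph.Walk.length_map, hw]

private lemma aux_iso_dist (φ : G ≃g G) (hconn : G.Connected) (a b : V) :
    G.dist (φ a) (φ b) = G.dist a b := by
  refine le_antisymm (aux_iso_dist_le G φ hconn a b) ?_
  have := aux_iso_dist_le G φ.symm hconn (φ a) (φ b)
  simpa using this

private lemma aux_dist_getVert_le (hconn : G.Connected) {x y : V} (w : G.Walk x y) :
    ∀ j, j ≤ w.length → G.dist x (w.getVert j) ≤ j := by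
  intro j hj
  induction j with
  | zero => simp [w.getVert_zero, SimpleGraph.dist_self]
  | succ n ih =>
    have hn : n ≤ w.length := Nat.le_of_succ_le hj
    have hadj : G.Adj (w.getVert n) (w.getVert (n+1)) := w.adj_getVert_succ hj
    have h2 : G.dist (w.getVert n) (w.getVert (n+1)) = 1 := by
      rw [SimpleGraph.dist_eq_one_iff_adj]; exact hadj
    have h3 := hconn.dist_triangle (u := x) (v := w.getVert n) (w := w.getVert (n+1))
    have h4 := ih hn
    omega

private lemma aux_getVert_dist (hconn : G.Connected) {x y : V} (w : G.Walk x y)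
    (hw : w.length = G.dist x y) (i : ℕ) (hi : i ≤ w.length) :
    G.dist x (w.getVert i) = i := by
  have h1 := aux_dist_getVert_le G hconn w i hi
  have h2 : G.dist (w.getVert i) y ≤ w.length - i := by
    have := aux_dist_getVert_le G hconn w.reverse (w.length - i)
      (by rw [SimpleGraph.Walk.length_reverse]; omega)
    rw [SimpleGraph.Walk.getVert_reverse] at this
    have hii : w.length - (w.length - i) = i := by omega
    rw [hii] at this
    rw [SimpleGraph.dist_comm]
    exact this
  have h3 := hconn.dist_triangle (u := x) (v := w.getVert i) (w := y)
  rw [← hw] at h3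
  omega

end Aux

section Aux2

variable {V : Type*} [Fintype V] [DecidableEq V] (G : SimpleGraph V)

private lemma aux_count [DecidableRel G.Adj] (hconn : G.Connected) (m : ℕ)
    (hreg : ∀ v : V, G.degree v = m)
    {x y : V} (P : G.Walk x y) (hP : P.IsPath) (hlen : P.length = G.dist x y)
    (S : Finset V) (hS : S = P.support.toFinset.biUnion (fun u => insert u (G.neighborFinset u))) :
    (P.length + 1) * (m + 1) ≤ 3 * S.card ∧ S.card ≤ (P.length + 1) * (m + 1) := by
  set T := P.support.toFinset with hT
  have hTcard : T.card = P.length + 1 := by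
    rw [hT, List.toFinset_card_of_nodup hP.support_nodup, SimpleGraph.Walk.length_support]
  have hnb : ∀ u : V, (insert u (G.neighborFinset u)).card = m + 1 := by
    intro u
    rw [Finset.card_insert_of_notMem (by simp), G.card_neighborFinset_eq_degree, hreg]
  have hdistinj : ∀ u ∈ T, ∀ u' ∈ T, G.dist x u = G.dist x u' → u = u' := by
    intro u hu u' hu' h
    rw [hT, List.mem_toFinset, SimpleGraph.Walk.mem_support_iff_exists_getVert] at hu hu'
    obtain ⟨i, hi, hile⟩ := hu
    obtain ⟨i', hi', hile'⟩ := hu'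
    have d1 := aux_getVert_dist G hconn P hlen i hile
    have d2 := aux_getVert_dist G hconn P hlen i' hile'
    rw [hi] at d1; rw [hi'] at d2
    rw [← hi, ← hi']
    congr 1
    omega
  have hfib : ∀ v : V, (T.filter (fun u => v ∈ insert u (G.neighborFinset u))).card ≤ 3 := by
    intro v
    set d := G.dist x v with hd
    have hcle : (T.filter (fun u => v ∈ insert u (G.neighborFinset u))).card ≤
        (Finset.Icc (d - 1) (d + 1)).card := by
      apply Finset.card_le_card_of_injOn (fun u => G.dist x u)
      · intro u hu
        rw [Finset.mem_coe, Finset.mem_filter] at hu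
        obtain ⟨huT, hv⟩ := hu
        rw [Finset.mem_insert, mem_neighborFinset] at hv
        rw [Finset.mem_coe, Finset.mem_Icc]; beta_reduce
        rcases hv with rfl | hadj
        · omega
        · have huv : G.dist u v = 1 := by rw [SimpleGraph.dist_eq_one_iff_adj]; exact hadj
          have hvu : G.dist v u = 1 := by
            rw [SimpleGraph.dist_eq_one_iff_adj]; exact hadj.symm
          have t1 := hconn.dist_triangle (u := x) (v := u) (w := v)
          have t2 := hconn.dist_triangle (u := x) (v := v) (w := u)
          omega
      · intro u hu u' hu' h
        exact hdistinj u (Finset.mem_filter.mp hu).1 u' (Finset.mem_filter.mp hu').1 h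
    have hIcc : (Finset.Icc (d - 1) (d + 1)).card ≤ 3 := by
      rw [Nat.card_Icc]; omega
    omega
  have hsub : ∀ u ∈ T, insert u (G.neighborFinset u) ⊆ S := by
    intro u hu
    rw [hS]
    intro v hv
    exact Finset.mem_biUnion.mpr ⟨u, hu, hv⟩
  have hsum : ∑ u ∈ T, (insert u (G.neighborFinset u)).card =
      ∑ v ∈ S, (T.filter (fun u => v ∈ insert u (G.neighborFinset u))).card := by
    calc ∑ u ∈ T, (insert u (G.neighborFinset u)).card
        = ∑ u ∈ T, (S.filter (fun v => v ∈ insert u (G.neighborFinset u))).card := by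
          apply Finset.sum_congr rfl
          intro u hu
          congr 1
          rw [Finset.filter_mem_eq_inter]
          exact (Finset.inter_eq_right.mpr (hsub u hu)).symm
      _ = ∑ v ∈ S, (T.filter (fun u => v ∈ insert u (G.neighborFinset u))).card := by
          simp only [Finset.card_filter]
          exact Finset.sum_comm
  constructor
  · calc (P.length + 1) * (m + 1) = ∑ u ∈ T, (insert u (G.neighborFinset u)).card := by
          rw [Finset.sum_congr rfl (fun u _ => hnb u), Finset.sum_const, hTcard, smul_eq_mul]
      _ = ∑ v ∈ S, (T.filter (fun u => v ∈ insert u (G.neighborFinset u))).card := hsum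
      _ ≤ ∑ _v ∈ S, 3 := Finset.sum_le_sum (fun v _ => hfib v)
      _ = 3 * S.card := by rw [Finset.sum_const, smul_eq_mul, Nat.mul_comm]
  · calc S.card ≤ ∑ u ∈ T, (insert u (G.neighborFinset u)).card := by
          rw [hS]; exact Finset.card_biUnion_le
      _ = (P.length + 1) * (m + 1) := by
          rw [Finset.sum_congr rfl (fun u _ => hnb u), Finset.sum_const, hTcard, smul_eq_mul]

private lemma aux_avg (hne : Nonempty V) (hvt : ∀ x y : V, ∃ φ : G ≃g G, φ x = y)
    (S U : Finset V) :
    ∃ φ : G ≃g G, U.card * S.card ≤ Fintype.card V * (U ∩ S.image φ).card := by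
  haveI : Finite (G ≃g G) := by
    apply Finite.of_injective (fun φ : G ≃g G => (φ.toEquiv : V ≃ V))
    intro φ ψ h
    apply RelIso.ext
    intro a
    have := congrArg (fun e : V ≃ V => e a) h
    simpa using this
  haveI : Fintype (G ≃g G) := Fintype.ofFinite _
  haveI : DecidableEq (G ≃g G) := Classical.decEq _
  set n := Fintype.card V with hn
  set cval : V → V → ℕ := fun w u => (univ.filter (fun φ : G ≃g G => φ w = u)).card with hcval
  have hconst : ∀ w u w' u', cval w u = cval w' u' := by
    intro w u w' u'
    obtain ⟨ψ1, hψ1⟩ := hvt w' w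
    obtain ⟨ψ2, hψ2⟩ := hvt u u'
    apply Finset.card_bij' (fun φ _ => ψ1.trans (φ.trans ψ2))
      (fun φ' _ => ψ1.symm.trans (φ'.trans ψ2.symm))
    · intro φ hφ
      simp only [Finset.mem_filter, Finset.mem_univ, true_and] at hφ ⊢
      simp [RelIso.trans_apply, hψ1, hφ, hψ2]
    · intro φ' hφ'
      simp only [Finset.mem_filter, Finset.mem_univ, true_and] at hφ' ⊢
      have h1 : ψ1.symm w = w' := by
        rw [← hψ1]; simp
      have h2 : ψ2.symm u' = u := by
        rw [← hψ2]; simp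
      simp [RelIso.trans_apply, h1, hφ', h2]
    · intro φ _
      apply RelIso.ext; intro a
      simp [RelIso.trans_apply]
    · intro φ _
      apply RelIso.ext; intro a
      simp [RelIso.trans_apply]
  obtain ⟨x0⟩ := hne
  set c := cval x0 x0 with hc
  have hcount : ∀ w : V, n * c = Fintype.card (G ≃g G) := by
    intro w
    have h1 : Fintype.card (G ≃g G) = ∑ u ∈ (univ : Finset V),
        ((univ : Finset (G ≃g G)).filter (fun φ => φ w = u)).card := by
      rw [← Finset.card_univ]
      apply Finset.card_eq_sum_card_fiberwise
      intro φ _; exact Finset.mem_univ _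
    have h2 : ∀ u ∈ (univ : Finset V), ((univ : Finset (G ≃g G)).filter (fun φ => φ w = u)).card = c := by
      intro u _; exact hconst w u x0 x0
    rw [h1, Finset.sum_congr rfl h2, Finset.sum_const, smul_eq_mul, Finset.card_univ, ← hn,
      Nat.mul_comm]
  have hkey : ∀ φ : G ≃g G, (U ∩ S.image φ).card = ∑ w ∈ S, (if φ w ∈ U then 1 else 0) := by
    intro φ
    have himg : U ∩ S.image φ = (S.filter (fun w => φ w ∈ U)).image φ := by
      ext v
      simp only [Finset.mem_inter, Finset.mem_image, Finset.mem_filter]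
      constructor
      · rintro ⟨hvU, w, hwS, rfl⟩
        exact ⟨w, ⟨hwS, hvU⟩, rfl⟩
      · rintro ⟨w, ⟨hwS, hwU⟩, rfl⟩
        exact ⟨hwU, w, hwS, rfl⟩
    rw [himg, Finset.card_image_of_injective _ (RelIso.injective φ), Finset.card_filter]
  have hsum : ∑ φ : G ≃g G, (U ∩ S.image φ).card = S.card * (U.card * c) := by
    calc ∑ φ : G ≃g G, (U ∩ S.image φ).card
        = ∑ φ : G ≃g G, ∑ w ∈ S, (if φ w ∈ U then 1 else 0) :=
          Finset.sum_congr rfl (fun φ _ => hkey φ)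
      _ = ∑ w ∈ S, ∑ φ : G ≃g G, (if φ w ∈ U then 1 else 0) := Finset.sum_comm
      _ = ∑ _w ∈ S, (U.card * c) := by
          apply Finset.sum_congr rfl
          intro w _
          rw [← Finset.card_filter]
          have e1 : ((univ : Finset (G ≃g G)).filter (fun φ => φ w ∈ U)).card
              = ∑ u ∈ U, (((univ : Finset (G ≃g G)).filter (fun φ => φ w ∈ U)).filter
                  (fun φ => φ w = u)).card := by
            apply Finset.card_eq_sum_card_fiberwise
            intro φ hφ
            exact (Finset.mem_filter.mp hφ).2
          rw [e1]
          have e2 : ∀ u ∈ U, (((univ : Finset (G ≃g G)).filter (fun φ => φ w ∈ U)).filter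
              (fun φ => φ w = u)).card = c := by
            intro u hu
            rw [Finset.filter_filter]
            have e3 : ((univ : Finset (G ≃g G)).filter (fun φ => φ w ∈ U ∧ φ w = u))
                 = ((univ : Finset (G ≃g G)).filter (fun φ => φ w = u)) := by
              apply Finset.filter_congr
              intro φ _
              constructor
              · exact fun h => h.2
              · exact fun h => ⟨h ▸ hu, h⟩
            rw [e3]
            exact hconst w u x0 x0
          rw [Finset.sum_congr rfl e2, Finset.sum_const, smul_eq_mul]
      _ = S.card * (U.card * c) := by rw [Finset.sum_const, smul_eq_mul]
  have hne' : (univ : Finset (G ≃g G)).Nonempty := ⟨Iso.refl, Finset.mem_univ _⟩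
  have havg : ∑ _φ ∈ (univ : Finset (G ≃g G)), U.card * S.card
      ≤ ∑ φ ∈ (univ : Finset (G ≃g G)), n * (U ∩ S.image φ).card := by
    rw [Finset.sum_const, smul_eq_mul, ← Finset.mul_sum, hsum, ← Fintype.card, ← hcount x0]
    ring_nf
    exact le_rfl
  obtain ⟨φ, _, hφ⟩ := Finset.exists_le_of_sum_le hne' havg
  exact ⟨φ, hφ⟩

end Aux2


private lemma aux_nat_small (m D : ℕ) (hm : 1 ≤ m) (hD : 1 ≤ D)
    (h : (D+1)*(m+1) ≤ 15) : 15*(m*D) ≤ 8*((D+1)*(m+1)) := by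
  have hm6 : m ≤ 6 := by
    have h2 : 2*(m+1) ≤ (D+1)*(m+1) := Nat.mul_le_mul_right (m+1) (by omega)
    omega
  have hD6 : D ≤ 6 := by
    have h2 : (D+1)*2 ≤ (D+1)*(m+1) := Nat.mul_le_mul_left (D+1) (by omega)
    omega
  interval_cases m <;> interval_cases D <;> omega

private lemma aux_real_big (a L lg2 x : ℝ) (ha1 : 1 ≤ a) (hL4 : 4 ≤ L)
    (hlg : lg2 ≤ 0.6932) (hx : x ≤ a * (L * lg2)) : x + 1 + a ≤ 1 * a * (1 + L) := by
  have hAL : (4:ℝ) ≤ a * L := by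
    calc (4:ℝ) = 1*4 := by norm_num
      _ ≤ a*L := mul_le_mul ha1 hL4 (by norm_num) (by linarith)
  have hprod : 0 ≤ (a*L - 4) * (1 - lg2) := by
    apply mul_nonneg <;> linarith
  nlinarith [hprod]

private lemma aux_real_small (a L lg2 x : ℝ) (ha1 : 1 ≤ a) (hL2 : 2 ≤ L)
    (hlg : lg2 ≤ 0.6932) (hx : x ≤ a * (L * lg2)) : x + 1 + a ≤ (15/8) * a * (1 + L) := by
  have hAL : (2:ℝ) ≤ a * L := by
    calc (2:ℝ) = 1*2 := by norm_num
      _ ≤ a*L := mul_le_mul ha1 hL2 (by norm_num) (by linarith)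
  have hprod : 0 ≤ (a*L - 2) * (15/8 - lg2) := by
    apply mul_nonneg <;> linarith
  nlinarith [hprod]

set_option maxHeartbeats 1000000 in
/-- A finite connected vertex-transitive graph of order `n`, degree
`m ≥ 1`, and diameter `D ≥ 1` admits a set of at most `(3n/(mD)) * (1 + log₂((D+1)(m+1)))`
geodesic paths of length `D` such that every vertex lies on, or is adjacent to a vertex
of, one of these paths. -/
theorem vertex_transitive_geodesic_cover {V : Type*} [Fintype V]
    (G : SimpleGraph V) [DecidableRel G.Adj] (hconn : G.Connected)
    (hvt : ∀ x y : V, ∃ φ : G ≃g G, φ x = y)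
    (m : ℕ) (hm : 1 ≤ m) (hreg : ∀ v : V, G.degree v = m)
    (D : ℕ) (hD : 1 ≤ D)
    (hdiam_le : ∀ x y : V, G.dist x y ≤ D) (hdiam_eq : ∃ x y : V, G.dist x y = D) :
    ∃ (k : ℕ) (ends : Fin k → V × V) (paths : ∀ i, G.Walk (ends i).1 (ends i).2),
      (∀ i, (paths i).IsPath ∧ (paths i).length = D ∧ G.dist (ends i).1 (ends i).2 = D) ∧
      (∀ v : V, ∃ i, v ∈ (paths i).support ∨ ∃ x ∈ (paths i).support, G.Adj v x) ∧
      (k : ℝ) ≤ (3 * Fintype.card V / (m * D)) * (1 + Real.logb 2 ((D + 1) * (m + 1))) := by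
  classical
  obtain ⟨x, y, hxy⟩ := hdiam_eq
  have hne : Nonempty V := hconn.nonempty
  obtain ⟨P, hPpath, hPdist⟩ := hconn.exists_path_of_dist x y
  have hPlen : P.length = D := by rw [hPdist, hxy]
  set S : Finset V := P.support.toFinset.biUnion (fun u => insert u (G.neighborFinset u))
    with hS
  obtain ⟨hclow, hcup⟩ := aux_count G hconn m hreg P hPpath hPdist S hS
  rw [hPlen] at hclow hcup
  -- basic cardinalities
  set n : ℕ := Fintype.card V with hn
  have hn1 : 1 ≤ n := Fintype.card_pos
  have hxS : x ∈ S := by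
    rw [hS]
    apply Finset.mem_biUnion.mpr
    exact ⟨x, by simp [SimpleGraph.Walk.start_mem_support], Finset.mem_insert_self _ _⟩
  have hs1 : 1 ≤ S.card := Finset.card_pos.mpr ⟨x, hxS⟩
  have hsn : S.card ≤ n := by
    rw [hn, ← Finset.card_univ]
    exact Finset.card_le_card (Finset.subset_univ S)
  -- covering property of a translate
  have hcov_img : ∀ (φ : G ≃g G) (v : V), v ∈ S.image φ →
      v ∈ (P.map φ.toHom).support ∨ ∃ z ∈ (P.map φ.toHom).support, G.Adj v z := by
    intro φ v hv
    obtain ⟨w, hwS, rfl⟩ := Finset.mem_image.mp hv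
    rw [hS] at hwS
    obtain ⟨u, huP, hw⟩ := Finset.mem_biUnion.mp hwS
    rw [List.mem_toFinset] at huP
    have huPm : φ u ∈ (P.map φ.toHom).support := by
      rw [SimpleGraph.Walk.support_map]
      exact List.mem_map.mpr ⟨u, huP, rfl⟩
    rw [Finset.mem_insert, mem_neighborFinset] at hw
    rcases hw with rfl | hadj
    · exact Or.inl huPm
    · refine Or.inr ⟨φ u, huPm, ?_⟩
      have : G.Adj (φ u) (φ w) := φ.map_adj_iff.mpr hadj
      exact this.symm
  -- greedy covering
  have hr0 : (0:ℝ) ≤ 1 - (S.card : ℝ) / n := by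
    have : (S.card : ℝ) / n ≤ 1 := by
      apply div_le_one_of_le₀
      · exact_mod_cast hsn
      · positivity
    linarith
  set r : ℝ := 1 - (S.card : ℝ) / n with hr
  have greedy : ∀ j : ℕ, ∃ (l : List (G ≃g G)) (U : Finset V),
      l.length = j ∧ (∀ v : V, v ∉ U → ∃ φ ∈ l, v ∈ S.image φ) ∧
      ((U.card : ℝ) ≤ (n : ℝ) * r ^ j) := by
    intro j
    induction j with
    | zero =>
      refine ⟨[], Finset.univ, rfl, ?_, ?_⟩
      · intro v hv
        exact absurd (Finset.mem_univ v) hv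
      · simp [hn]
    | succ j ih =>
      obtain ⟨l, U, hlen, hcov, hcard⟩ := ih
      obtain ⟨φ, hφ⟩ := aux_avg G hne hvt S U
      refine ⟨φ :: l, U \ S.image φ, by simp [hlen], ?_, ?_⟩
      · intro v hv
        rw [Finset.mem_sdiff] at hv
        push_neg at hv
        by_cases hvU : v ∈ U
        · exact ⟨φ, List.mem_cons_self, hv hvU⟩
        · obtain ⟨ψ, hψl, hψ⟩ := hcov v hvU
          exact ⟨ψ, List.mem_cons_of_mem _ hψl, hψ⟩
      · have hint : (U.card : ℝ) * S.card ≤ (n : ℝ) * (U ∩ S.image φ).card := by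
          exact_mod_cast hφ
        have hsd : (U \ S.image φ).card + (U ∩ S.image φ).card = U.card := by
          rw [Finset.card_sdiff_add_card_inter]
        have hNpos : (0:ℝ) < n := by positivity
        have h1 : ((U \ S.image φ).card : ℝ) = (U.card : ℝ) - (U ∩ S.image φ).card := by
          have := hsd
          push_cast [← this]
          ring
        have h2 : (U.card : ℝ) * S.card / n ≤ ((U ∩ S.image φ).card : ℝ) := by
          rw [div_le_iff₀ hNpos]
          linarith [hint]
        have h3 : ((U \ S.image φ).card : ℝ) ≤ (U.card : ℝ) * r := by
          rw [h1, hr]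
          have : (U.card : ℝ) * (1 - (S.card:ℝ)/n) = U.card - U.card * S.card / n := by ring
          rw [this]
          linarith [h2]
        calc ((U \ S.image φ).card : ℝ) ≤ (U.card : ℝ) * r := h3
          _ ≤ ((n:ℝ) * r ^ j) * r := by
              apply mul_le_mul_of_nonneg_right hcard hr0
          _ = (n:ℝ) * r ^ (j+1) := by ring
  -- choose the number of greedy steps
  set sR : ℝ := (S.card : ℝ) with hsR
  have hsR1 : (1:ℝ) ≤ sR := by rw [hsR]; exact_mod_cast hs1
  set a : ℝ := (n : ℝ) / sR with ha
  have hsnR : sR ≤ (n:ℝ) := by rw [hsR]; exact_mod_cast hsn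
  have ha1 : (1:ℝ) ≤ a := by
    rw [ha, le_div_iff₀ (by linarith)]
    linarith
  set j0 : ℕ := Nat.ceil (a * Real.log sR) with hj0
  obtain ⟨l, U, hllen, hcov, hUcard⟩ := greedy j0
  -- the leftover translates
  have hchoose : ∀ v : V, ∃ φ : G ≃g G, φ x = v := fun v => hvt x v
  set cfun : V → (G ≃g G) := fun v => (hchoose v).choose with hcfun
  have hcfun_spec : ∀ v : V, (cfun v) x = v := fun v => (hchoose v).choose_spec
  set Ls : List (G ≃g G) := l ++ U.toList.map cfun with hLs
  refine ⟨Ls.length, fun i => ((Ls.get i) x, (Ls.get i) y),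
    fun i => P.map (Ls.get i).toHom, ?_, ?_, ?_⟩
  · intro i
    refine ⟨SimpleGraph.Walk.map_isPath_of_injective (RelIso.injective _) hPpath, ?_, ?_⟩
    · rw [SimpleGraph.Walk.length_map, hPlen]
    · rw [aux_iso_dist G _ hconn x y, hxy]
  · intro v
    by_cases hvU : v ∈ U
    · have hmem : cfun v ∈ Ls := by
        rw [hLs]
        apply List.mem_append_right
        exact List.mem_map.mpr ⟨v, Finset.mem_toList.mpr hvU, rfl⟩
      obtain ⟨i, hi⟩ := List.mem_iff_get.mp hmem
      refine ⟨i, Or.inl ?_⟩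
      rw [SimpleGraph.Walk.support_map]
      refine List.mem_map.mpr ⟨x, SimpleGraph.Walk.start_mem_support _, ?_⟩
      exact hi ▸ hcfun_spec v
    · obtain ⟨φ, hφl, hφ⟩ := hcov v hvU
      have hmem : φ ∈ Ls := by
        rw [hLs]; exact List.mem_append_left _ hφl
      obtain ⟨i, hi⟩ := List.mem_iff_get.mp hmem
      refine ⟨i, ?_⟩
      exact hcov_img (Ls.get i) v (by rw [hi]; exact hφ)
  · -- the cardinality bound
    have hklen : Ls.length = j0 + U.card := by
      rw [hLs, List.length_append, List.length_map, hllen, Finset.length_toList]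
    -- bound on leftover
    have hNpos : (0:ℝ) < n := by positivity
    have hsRpos : (0:ℝ) < sR := by linarith
    have hrexp : r ≤ Real.exp (-(sR / n)) := by
      have := Real.add_one_le_exp (-(sR / n))
      rw [hr, hsR]
      linarith [this]
    have hUa : (U.card : ℝ) ≤ a := by
      have h1 : (U.card : ℝ) ≤ (n:ℝ) * r ^ j0 := hUcard
      have h2 : r ^ j0 ≤ Real.exp (-(sR / n)) ^ j0 := pow_le_pow_left₀ hr0 hrexp j0
      have h3 : Real.exp (-(sR / n)) ^ j0 = Real.exp (-(sR / n) * j0) := by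
        rw [← Real.exp_nat_mul]
        ring_nf
      have h4 : Real.exp (-(sR / n) * j0) ≤ Real.exp (-Real.log sR) := by
        apply Real.exp_le_exp.mpr
        have hj0ge : a * Real.log sR ≤ (j0 : ℝ) := Nat.le_ceil _
        have hfrac : (0:ℝ) < sR / n := by positivity
        have hprod : (sR/(n:ℝ)) * ((n:ℝ)/sR) = 1 := by
          rw [div_mul_div_comm, mul_comm]
          exact div_self (by positivity)
        have hstep := mul_le_mul_of_nonneg_left hj0ge (le_of_lt hfrac)
        have : Real.log sR ≤ (sR / n) * j0 := by
          calc Real.log sR = ((sR/(n:ℝ)) * ((n:ℝ)/sR)) * Real.log sR := by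
                rw [hprod, one_mul]
            _ = (sR / n) * (a * Real.log sR) := by rw [ha]; ring
            _ ≤ (sR / n) * j0 := hstep
        linarith
      have h5 : Real.exp (-Real.log sR) = 1 / sR := by
        rw [Real.exp_neg, Real.exp_log hsRpos, one_div]
      calc (U.card : ℝ) ≤ (n:ℝ) * r ^ j0 := h1
        _ ≤ (n:ℝ) * Real.exp (-(sR / n) * j0) := by
            rw [← h3]
            exact mul_le_mul_of_nonneg_left h2 (le_of_lt hNpos)
        _ ≤ (n:ℝ) * (1 / sR) := by
            rw [← h5]
            exact mul_le_mul_of_nonneg_left h4 (le_of_lt hNpos)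
        _ = a := by rw [ha]; ring
    have hj0le : (j0 : ℝ) ≤ a * Real.log sR + 1 := by
      have h0 : (0:ℝ) ≤ a * Real.log sR := by
        apply mul_nonneg (by linarith)
        exact Real.log_nonneg hsR1
      exact le_of_lt (Nat.ceil_lt_add_one h0)
    have hktot : (Ls.length : ℝ) ≤ a * Real.log sR + 1 + a := by
      rw [hklen]
      push_cast
      linarith [hUa, hj0le]
    -- now the pure arithmetic
    set s'R : ℝ := ((D:ℝ) + 1) * ((m:ℝ) + 1) with hs'R
    set L : ℝ := Real.logb 2 s'R with hLdef
    have hm' : (1:ℝ) ≤ (m:ℝ) := by exact_mod_cast hm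
    have hD' : (1:ℝ) ≤ (D:ℝ) := by exact_mod_cast hD
    have hNpos : (0:ℝ) < (n:ℝ) := by positivity
    have hsRpos : (0:ℝ) < sR := by linarith
    have hmDpos : (0:ℝ) < (m:ℝ) * (D:ℝ) := by
      apply mul_pos <;> linarith
    have hlog2pos : (0:ℝ) < Real.log 2 := Real.log_pos (by norm_num)
    have hs'R4 : (4:ℝ) ≤ s'R := by
      rw [hs'R]
      calc (4:ℝ) = 2*2 := by norm_num
        _ ≤ ((D:ℝ)+1)*((m:ℝ)+1) := mul_le_mul (by linarith) (by linarith) (by norm_num) (by linarith)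
    have hL2 : (2:ℝ) ≤ L := by
      rw [hLdef, Real.logb, le_div_iff₀ hlog2pos]
      have hl4 : Real.log 4 ≤ Real.log s'R := Real.log_le_log (by norm_num) hs'R4
      have h4 : Real.log 4 = 2 * Real.log 2 := by
        rw [show (4:ℝ) = 2^2 by norm_num, Real.log_pow]
        push_cast; ring
      linarith
    have hcupR : sR ≤ s'R := by
      rw [hsR, hs'R]; exact_mod_cast hcup
    have hlogs : Real.log sR ≤ L * Real.log 2 := by
      have h1 : Real.log sR ≤ Real.log s'R := Real.log_le_log hsRpos hcupR
      have h2 : L * Real.log 2 = Real.log s'R := by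
        rw [hLdef, Real.logb]
        exact div_mul_cancel₀ _ (ne_of_gt hlog2pos)
      linarith
    have h3s : s'R ≤ 3 * sR := by
      rw [hs'R, hsR]; exact_mod_cast hclow
    have hln2 : Real.log 2 ≤ 0.6932 := by
      have := Real.log_two_lt_d9
      linarith
    have hTa : ∀ cc : ℝ, 0 ≤ cc → cc * ((m:ℝ) * (D:ℝ)) ≤ s'R →
        cc * a ≤ 3 * (n:ℝ) / ((m:ℝ) * (D:ℝ)) := by
      intro cc hcc hkey
      rw [ha]
      have e1 : cc * ((n:ℝ)/sR) = cc * (n:ℝ) / sR := by ring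
      rw [e1, div_le_div_iff₀ hsRpos hmDpos]
      have h1 : cc * ((m:ℝ)*(D:ℝ)) ≤ 3*sR := le_trans hkey h3s
      linarith [mul_le_mul_of_nonneg_left h1 (le_of_lt hNpos)]
    have h1L : (0:ℝ) ≤ 1 + L := by linarith
    by_cases hbig : 16 ≤ (D+1) * (m+1)
    · -- large case
      have hs'R16 : (16:ℝ) ≤ s'R := by
        rw [hs'R]
        have := (Nat.cast_le (α := ℝ)).mpr hbig
        push_cast at this
        linarith
      have hL4 : (4:ℝ) ≤ L := by
        rw [hLdef, Real.logb, le_div_iff₀ hlog2pos]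
        have hl16 : Real.log 16 ≤ Real.log s'R := Real.log_le_log (by norm_num) hs'R16
        have h16 : Real.log 16 = 4 * Real.log 2 := by
          rw [show (16:ℝ) = 2^4 by norm_num, Real.log_pow]
          push_cast; ring
        linarith
      have hcc : (1:ℝ) * ((m:ℝ)*(D:ℝ)) ≤ s'R := by
        rw [one_mul, hs'R]
        have hexp : ((D:ℝ)+1)*((m:ℝ)+1) = (m:ℝ)*(D:ℝ) + (D:ℝ) + (m:ℝ) + 1 := by ring
        rw [hexp]
        linarith
      have hTa1 : 1 * a ≤ 3 * (n:ℝ) / ((m:ℝ) * (D:ℝ)) := hTa 1 (by norm_num) hcc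
      have hkeyineq : a * Real.log sR + 1 + a ≤ 1 * a * (1 + L) := by
        have hls : a * Real.log sR ≤ a * (L * Real.log 2) :=
          mul_le_mul_of_nonneg_left hlogs (by linarith)
        exact aux_real_big a L (Real.log 2) (a * Real.log sR) ha1 hL4 hln2 hls
      calc (Ls.length : ℝ) ≤ a * Real.log sR + 1 + a := hktot
        _ ≤ 1 * a * (1 + L) := hkeyineq
        _ ≤ (3 * (n:ℝ) / ((m:ℝ) * (D:ℝ))) * (1 + L) :=
            mul_le_mul_of_nonneg_right hTa1 h1L
    · -- small case
      push_neg at hbig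
      have hsmall : (D+1) * (m+1) ≤ 15 := by omega
      have hmd8 : 15 * (m*D) ≤ 8 * ((D+1)*(m+1)) := aux_nat_small m D hm hD hsmall
      have hcc : (15/8 : ℝ) * ((m:ℝ)*(D:ℝ)) ≤ s'R := by
        rw [hs'R]
        have := (Nat.cast_le (α := ℝ)).mpr hmd8
        push_cast at this
        linarith
      have hTa' : (15/8) * a ≤ 3 * (n:ℝ) / ((m:ℝ) * (D:ℝ)) := hTa (15/8) (by norm_num) hcc
      have hkeyineq : a * Real.log sR + 1 + a ≤ (15/8) * a * (1 + L) := by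
        have hls : a * Real.log sR ≤ a * (L * Real.log 2) :=
          mul_le_mul_of_nonneg_left hlogs (by linarith)
        exact aux_real_small a L (Real.log 2) (a * Real.log sR) ha1 hL2 hln2 hls
      calc (Ls.length : ℝ) ≤ a * Real.log sR + 1 + a := hktot
        _ ≤ (15/8) * a * (1 + L) := hkeyineq
        _ ≤ (3 * (n:ℝ) / ((m:ℝ) * (D:ℝ))) * (1 + L) :=
            mul_le_mul_of_nonneg_right hTa' h1L
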